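/- Let 2m < n and G⁺_{2m}(x,y) = |x-y|^{-(n-2m)} - |x*-y|^{-(n-2m)} for x,y ∈ ℝⁿ₊, x ≠ y, where x* is the reflection across ∂ℝⁿ₊. For λ < 0, let Σ_λ = {x ∈ ℝⁿ₊ : x₁ < λ} and x^λ = (2λ-x₁, x₂,…,x_n). Then for all x, y ∈ Σ_λ with x ≠ y, G⁺_{2m}(x,y) - G⁺_{2m}(x^λ, y) > 0. -/

import Mathlib

noncomputable section

/-- The last coordinate of a point in `ℝⁿ`. -/
def lastCoord (n : ℕ) (x : EuclideanSpace ℝ (Fin n)) : ℝ :=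
  if h : 0 < n then x ⟨n - 1, by omega⟩ else 0

/-- The upper half space `ℝⁿ₊ = {x : xₙ > 0}`. -/
def upperHalf (n : ℕ) : Set (EuclideanSpace ℝ (Fin n)) := {x | 0 < lastCoord n x}

/-- Reflection `x*` of `x` across `∂ℝⁿ₊` (the last coordinate is negated). -/
def reflLast (n : ℕ) (x : EuclideanSpace ℝ (Fin n)) : EuclideanSpace ℝ (Fin n) :=
  WithLp.toLp 2 fun i : Fin n => if (i : ℕ) = n - 1 then -x i else x i

/-- The Green's function `G⁺₂ₘ` of `(-Δ)^m` on the half space. -/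
def G2m (n m : ℕ) (x y : EuclideanSpace ℝ (Fin n)) : ℝ :=
  ‖x - y‖ ^ (-((n : ℝ) - 2 * m)) - ‖reflLast n x - y‖ ^ (-((n : ℝ) - 2 * m))

/-- Reflection `x^λ = (2λ - x₁, x₂, …, xₙ)` about the hyperplane `x₁ = λ`. -/
def reflHyper (n : ℕ) (l : ℝ) (x : EuclideanSpace ℝ (Fin n)) :
    EuclideanSpace ℝ (Fin n) :=
  WithLp.toLp 2 fun i : Fin n => if (i : ℕ) = 0 then 2 * l - x i else x i

/-- `u ↦ u^c - (u+t)^c` is strictly decreasing on `(0,∞)` for `c < 0 < t`. -/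
lemma aux_strictAntiOn (c t : ℝ) (hc : c < 0) (ht : 0 < t) :
    StrictAntiOn (fun u : ℝ => u ^ c - (u + t) ^ c) (Set.Ioi 0) := by
  apply strictAntiOn_of_deriv_neg (convex_Ioi 0)
  · apply ContinuousOn.sub
    · intro u hu
      exact (Real.continuousAt_rpow_const u c (Or.inl (ne_of_gt hu))).continuousWithinAt
    · intro u hu
      have h1 : ContinuousAt (fun u : ℝ => u + t) u := by fun_prop
      exact (h1.rpow_const (Or.inl (by have := hu.out; positivity))).continuousWithinAt
  · intro u hu
    rw [interior_Ioi] at hu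
    have hu0 : (0:ℝ) < u := hu
    have hut : (0:ℝ) < u + t := by positivity
    have h1 : HasDerivAt (fun u : ℝ => u ^ c) (c * u ^ (c - 1)) u :=
      Real.hasDerivAt_rpow_const (Or.inl hu0.ne')
    have h2 : HasDerivAt (fun u : ℝ => (u + t) ^ c) (c * (u + t) ^ (c - 1)) u := by
      simpa using ((hasDerivAt_id u).add_const t).rpow_const (Or.inl hut.ne')
    rw [deriv_fun_sub h1.differentiableAt h2.differentiableAt, h1.deriv, h2.deriv]
    have hlt : (u + t) ^ (c - 1) < u ^ (c - 1) :=
      Real.rpow_lt_rpow_of_neg hu0 (by linarith) (by linarith)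
    nlinarith

/-- Squared norm in Euclidean space as a sum of squares. -/
lemma norm_sq_eq (n : ℕ) (v : EuclideanSpace ℝ (Fin n)) :
    ‖v‖ ^ 2 = ∑ i, (v i) ^ 2 := by
  rw [EuclideanSpace.norm_eq, Real.sq_sqrt (by positivity)]
  simp [sq_abs]

lemma rpow_norm (v : EuclideanSpace ℝ (Fin n)) (s : ℝ) :
    ‖v‖ ^ (-s) = (∑ i, (v i) ^ 2) ^ (-(s / 2)) := by
  rw [← norm_sq_eq, ← Real.rpow_natCast ‖v‖ 2, ← Real.rpow_mul (norm_nonneg v)]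
  congr 1
  push_cast
  ring

/-- Strict monotonicity of `G⁺₂ₘ` under reflection: for `x, y` in
`Σ_λ = {x ∈ ℝⁿ₊ : x₁ < λ}` with `λ < 0`, `G⁺₂ₘ(x,y) - G⁺₂ₘ(x^λ,y) > 0`. -/
theorem G2m_refl_monotone (n m : ℕ) (hn : 2 ≤ n) (hm : 2 * m < n) (l : ℝ) (hl : l < 0)
    (x y : EuclideanSpace ℝ (Fin n))
    (hx : x ∈ upperHalf n) (hy : y ∈ upperHalf n)
    (hx1 : x ⟨0, by omega⟩ < l) (hy1 : y ⟨0, by omega⟩ < l) (hxy : x ≠ y) :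
    0 < G2m n m x y - G2m n m (reflHyper n l x) y := by
  set s : ℝ := (n : ℝ) - 2 * m with hs
  have hspos : 0 < s := by
    have : (2 * m : ℝ) < n := by exact_mod_cast hm
    simp [hs]; linarith
  set i0 : Fin n := ⟨0, by omega⟩ with hi0
  set iN : Fin n := ⟨n - 1, by omega⟩ with hiN
  have hne : (0 : ℕ) ≠ n - 1 := by omega
  -- squared distances
  set A := ∑ i, ((x - y) i) ^ 2 with hA
  set B := ∑ i, ((reflLast n x - y) i) ^ 2 with hB
  set C := ∑ i, ((reflHyper n l x - y) i) ^ 2 with hC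
  set D := ∑ i, ((reflLast n (reflHyper n l x) - y) i) ^ 2 with hD
  set t : ℝ := 4 * (l - x i0) * (l - y i0) with hT
  have htpos : 0 < t := by
    have h1 : 0 < l - x i0 := by simpa [hi0] using sub_pos.2 hx1
    have h2 : 0 < l - y i0 := by simpa [hi0] using sub_pos.2 hy1
    positivity
  have hxN : 0 < x iN := by
    have := hx
    simp only [upperHalf, lastCoord, Set.mem_setOf_eq, dif_pos (by omega : 0 < n)] at this
    exact this
  have hyN : 0 < y iN := by
    have := hy
    simp only [upperHalf, lastCoord, Set.mem_setOf_eq, dif_pos (by omega : 0 < n)] at this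
    exact this
  -- helper: sum of an if-function
  have sum_ite : ∀ r : ℝ, (∑ i : Fin n, if (i : ℕ) = 0 then r else 0) = r := by
    intro r
    have : ∀ i : Fin n, (if (i : ℕ) = 0 then r else 0) = (if i = i0 then r else 0) := by
      intro i
      congr 1
      simp [Fin.ext_iff, hi0]
    rw [Finset.sum_congr rfl (fun i _ => this i)]
    simp
  have hCA : C = A + t := by
    rw [hC, hA, ← sum_ite t, ← Finset.sum_add_distrib]
    apply Finset.sum_congr rfl
    intro i _
    by_cases h : (i : ℕ) = 0
    · have hix : i = i0 := Fin.ext (by simpa [hi0] using h)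
      have ex : x i0 = x i := by rw [hix]
      have ey : y i0 = y i := by rw [hix]
      simp only [PiLp.sub_apply, reflHyper, PiLp.toLp_apply, hT, ← ex, ← ey]
      split_ifs <;> first | ring1 | omega | (exfalso; omega)
    · simp only [PiLp.sub_apply, reflHyper, PiLp.toLp_apply]
      split_ifs <;> first | ring1 | omega | (exfalso; omega)
  have hDB : D = B + t := by
    rw [hD, hB, ← sum_ite t, ← Finset.sum_add_distrib]
    apply Finset.sum_congr rfl
    intro i _
    by_cases h : (i : ℕ) = 0
    · have hix : i = i0 := Fin.ext (by simpa [hi0] using h)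
      have ex : x i0 = x i := by rw [hix]
      have ey : y i0 = y i := by rw [hix]
      simp only [PiLp.sub_apply, reflLast, reflHyper, PiLp.toLp_apply, hT, ← ex, ← ey]
      split_ifs <;> first | ring1 | omega | (exfalso; omega)
    · simp only [PiLp.sub_apply, reflLast, reflHyper, PiLp.toLp_apply]
      split_ifs <;> first | ring1 | omega | (exfalso; omega)
  have hBA : B = A + 4 * x iN * y iN := by
    rw [hB, hA]
    have : (4 : ℝ) * x iN * y iN = ∑ i : Fin n, if (i : ℕ) = n - 1 then 4 * x iN * y iN else 0 := by
      have : ∀ i : Fin n, (if (i : ℕ) = n - 1 then 4 * x iN * y iN else 0)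
          = (if i = iN then 4 * x iN * y iN else 0) := by
        intro i; congr 1; simp [Fin.ext_iff, hiN]
      rw [Finset.sum_congr rfl (fun i _ => this i)]
      simp
    rw [this, ← Finset.sum_add_distrib]
    apply Finset.sum_congr rfl
    intro i _
    by_cases h : (i : ℕ) = n - 1
    · have hix : i = iN := Fin.ext (by simpa [hiN] using h)
      have ex : x iN = x i := by rw [hix]
      have ey : y iN = y i := by rw [hix]
      simp only [PiLp.sub_apply, reflLast, PiLp.toLp_apply, ← ex, ← ey]
      split_ifs <;> first | ring1 | omega | (exfalso; omega)
    · simp only [PiLp.sub_apply, reflLast, PiLp.toLp_apply]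
      split_ifs <;> first | ring1 | omega | (exfalso; omega)
  have hApos : 0 < A := by
    have hAnn : 0 ≤ A := Finset.sum_nonneg fun i _ => sq_nonneg _
    rcases hAnn.lt_or_eq with h | h
    · exact h
    · exfalso
      apply hxy
      have h0 : ∀ i ∈ Finset.univ, ((x - y) i) ^ 2 = 0 :=
        (Finset.sum_eq_zero_iff_of_nonneg (fun i _ => sq_nonneg _)).1 h.symm
      ext i
      have := h0 i (Finset.mem_univ i)
      have : (x - y) i = 0 := by
        have := sq_eq_zero_iff.1 this
        exact this
      simpa [sub_eq_zero] using this
  have hAB : A < B := by rw [hBA]; nlinarith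
  have hBpos : 0 < B := hApos.trans hAB
  -- rewrite the goal in terms of rpow of the squared distances
  have key := aux_strictAntiOn (-(s / 2)) t (by linarith) htpos hApos (Set.mem_Ioi.2 hBpos) hAB
  simp only at key
  have eA : ‖x - y‖ ^ (-s) = A ^ (-(s / 2)) := rpow_norm _ s
  have eB : ‖reflLast n x - y‖ ^ (-s) = B ^ (-(s / 2)) := rpow_norm _ s
  have eC : ‖reflHyper n l x - y‖ ^ (-s) = C ^ (-(s / 2)) := rpow_norm _ s
  have eD : ‖reflLast n (reflHyper n l x) - y‖ ^ (-s) = D ^ (-(s / 2)) := rpow_norm _ s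
  simp only [G2m, ← hs, eA, eB, eC, eD, hCA, hDB]
  linarith
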